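/- arXiv:2010.10072 — 3 statements merged into one kernel-verified Lean document; each statement's English description precedes it below -/
import Mathlib

section
/- For every real k ≥ 1 + 1/arcsinh(1) (arcsinh(1) = Real.arsinh 1), the conic domain {w ∈ ℂ : Re(w) > k·|w - 1|} is contained in Ω_ρ = ρ '' 𝔻; consequently the class k-ST of k-starlike functions is contained in S*_ρ. -/
open Complex

/-- Principal branch of the complex inverse hyperbolic sine. -/
noncomputable def carcsinh (z : ℂ) : ℂ := Complex.log (z + (1 + z ^ 2) ^ ((1 : ℂ) / 2))

/-- The function `ρ(z) = 1 + arcsinh z`. -/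
noncomputable def ρ (z : ℂ) : ℂ := 1 + carcsinh z

/-- The open unit disk in `ℂ`. -/
def unitDisk : Set ℂ := {z : ℂ | ‖z‖ < 1}

/-- The petal-shaped domain `Ω_ρ = ρ '' 𝔻`. -/
noncomputable def OmegaRho : Set ℂ := ρ '' unitDisk

lemma arsinh_one_pos : 0 < Real.arsinh 1 := Real.arsinh_pos_iff.2 one_pos

lemma arsinh_one_lt_one : Real.arsinh 1 < 1 := by
  have h : (1 : ℝ) < Real.sinh 1 := Real.self_lt_sinh_iff.2 one_pos
  calc Real.arsinh 1 < Real.arsinh (Real.sinh 1) := Real.arsinh_lt_arsinh.2 h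
    _ = 1 := Real.arsinh_sinh 1

lemma convexOn_sinh_Icc : ConvexOn ℝ (Set.Icc 0 (Real.arsinh 1)) Real.sinh := by
  apply convexOn_of_deriv2_nonneg (convex_Icc _ _)
    Real.continuous_sinh.continuousOn Real.differentiable_sinh.differentiableOn
  · rw [Real.deriv_sinh]
    exact Real.differentiable_cosh.differentiableOn
  · intro x hx
    rw [interior_Icc] at hx
    have : deriv^[2] Real.sinh x = Real.sinh x := by
      simp [Function.iterate_succ, Real.deriv_sinh, Real.deriv_cosh]
    rw [this]
    exact Real.sinh_nonneg_iff.2 hx.1.le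

lemma sinh_le_div (t : ℝ) (h0 : 0 ≤ t) (h1 : t ≤ Real.arsinh 1) :
    Real.sinh t ≤ t / Real.arsinh 1 := by
  set a : ℝ := Real.arsinh 1 with ha_def
  have ha : 0 < a := arsinh_one_pos
  have hmem0 : (0 : ℝ) ∈ Set.Icc (0 : ℝ) a := ⟨le_refl 0, ha.le⟩
  have hmema : a ∈ Set.Icc (0 : ℝ) a := ⟨ha.le, le_refl a⟩
  have hθ0 : 0 ≤ 1 - t / a := by
    have : t / a ≤ 1 := (div_le_one ha).2 h1
    linarith
  have hθ1 : 0 ≤ t / a := div_nonneg h0 ha.le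
  have hsum : (1 - t / a) + t / a = 1 := by ring
  have := convexOn_sinh_Icc.2 hmem0 hmema hθ0 hθ1 hsum
  have heq : (1 - t / a) • (0 : ℝ) + (t / a) • a = t := by
    rw [smul_zero, smul_eq_mul, zero_add, div_mul_cancel₀ t ha.ne']
  rw [heq] at this
  calc Real.sinh t ≤ (1 - t / a) • Real.sinh 0 + (t / a) • Real.sinh a := this
    _ = t / a := by
        rw [Real.sinh_zero, Real.sinh_arsinh]
        simp
    _ = t / a := rfl

lemma sinh_decomp (u : ℂ) :
    Complex.sinh u = ((Real.sinh u.re * Real.cos u.im : ℝ) : ℂ) +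
      ((Real.cosh u.re * Real.sin u.im : ℝ) : ℂ) * I := by
  have h : u = (u.re : ℂ) + (u.im : ℂ) * I := (Complex.re_add_im u).symm
  nth_rewrite 1 [h]
  rw [Complex.sinh_add, Complex.sinh_mul_I, Complex.cosh_mul_I,
    ← Complex.ofReal_sinh, ← Complex.ofReal_cosh, ← Complex.ofReal_sin, ← Complex.ofReal_cos]
  push_cast
  ring

lemma cosh_decomp (u : ℂ) :
    Complex.cosh u = ((Real.cosh u.re * Real.cos u.im : ℝ) : ℂ) +
      ((Real.sinh u.re * Real.sin u.im : ℝ) : ℂ) * I := by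
  have h : u = (u.re : ℂ) + (u.im : ℂ) * I := (Complex.re_add_im u).symm
  nth_rewrite 1 [h]
  rw [Complex.cosh_add, Complex.sinh_mul_I, Complex.cosh_mul_I,
    ← Complex.ofReal_sinh, ← Complex.ofReal_cosh, ← Complex.ofReal_sin, ← Complex.ofReal_cos]
  push_cast
  ring

lemma abs_sinh_lt_one (u : ℂ) (hu : ‖u‖ < Real.arsinh 1) :
    ‖Complex.sinh u‖ < 1 := by
  set a : ℝ := Real.arsinh 1 with ha_def
  have ha : 0 < a := arsinh_one_pos
  have ha1 : a < 1 := arsinh_one_lt_one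
  set x := u.re with hx_def
  set y := u.im with hy_def
  have hsq : ‖Complex.sinh u‖ ^ 2 =
      (Real.sinh x * Real.cos y) ^ 2 + (Real.cosh x * Real.sin y) ^ 2 := by
    rw [Complex.sq_norm, sinh_decomp u, Complex.normSq_add_mul_I]
  have hid : (Real.sinh x * Real.cos y) ^ 2 + (Real.cosh x * Real.sin y) ^ 2 =
      Real.sinh x ^ 2 + Real.sin y ^ 2 := by
    have h1 := Real.sin_sq_add_cos_sq y
    have h2 := Real.cosh_sq x
    nlinarith [h1, h2]
  -- |x| ≤ |u| < a
  have hxa : |x| < a := lt_of_le_of_lt (Complex.abs_re_le_norm u) hu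
  have hya : |y| < a := lt_of_le_of_lt (Complex.abs_im_le_norm u) hu
  have hsinhx : Real.sinh x ^ 2 ≤ x ^ 2 / a ^ 2 := by
    have h1 : |Real.sinh x| = Real.sinh |x| := Real.abs_sinh x
    have h2 : Real.sinh |x| ≤ |x| / a := sinh_le_div |x| (abs_nonneg x) hxa.le
    have h3 : Real.sinh x ^ 2 = (Real.sinh |x|) ^ 2 := by rw [← h1, _root_.sq_abs]
    rw [h3]
    have h4 : (0 : ℝ) ≤ Real.sinh |x| := Real.sinh_nonneg_iff.2 (abs_nonneg x)
    have := mul_self_le_mul_self h4 h2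
    calc Real.sinh |x| ^ 2 ≤ (|x| / a) ^ 2 := by nlinarith
      _ = x ^ 2 / a ^ 2 := by rw [div_pow, _root_.sq_abs]
  have hsiny : Real.sin y ^ 2 ≤ y ^ 2 := Real.sin_sq_le_sq
  have hxy : x ^ 2 + y ^ 2 < a ^ 2 := by
    have : ‖u‖ ^ 2 < a ^ 2 := by
      nlinarith [norm_nonneg u]
    rwa [Complex.sq_norm, Complex.normSq_apply, ← pow_two, ← pow_two] at this
  have hfinal : ‖Complex.sinh u‖ ^ 2 < 1 := by
    rw [hsq, hid]
    have hy2 : y ^ 2 ≤ y ^ 2 / a ^ 2 := by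
      rw [le_div_iff₀ (by positivity)]
      have haa : a ^ 2 ≤ 1 := by nlinarith
      nlinarith [sq_nonneg y]
    have : x ^ 2 / a ^ 2 + y ^ 2 / a ^ 2 < 1 := by
      rw [← add_div, div_lt_one (by positivity)]
      exact hxy
    linarith
  nlinarith [norm_nonneg (Complex.sinh u)]

lemma carcsinh_sinh (u : ℂ) (hu : ‖u‖ < Real.arsinh 1) :
    carcsinh (Complex.sinh u) = u := by
  have ha1 : Real.arsinh 1 < 1 := arsinh_one_lt_one
  have hx : |u.re| < 1 := lt_of_le_of_lt (Complex.abs_re_le_norm u) (hu.trans ha1)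
  have hy : |u.im| < 1 := lt_of_le_of_lt (Complex.abs_im_le_norm u) (hu.trans ha1)
  have hpi : (3 : ℝ) < Real.pi := Real.pi_gt_three
  have hcos : 0 < Real.cos u.im := by
    apply Real.cos_pos_of_mem_Ioo
    constructor
    · rw [abs_lt] at hy; linarith
    · rw [abs_lt] at hy; linarith
  have hre : 0 < (Complex.cosh u).re := by
    have hre_eq : (((Real.cosh u.re * Real.cos u.im : ℝ) : ℂ) +
        ((Real.sinh u.re * Real.sin u.im : ℝ) : ℂ) * I).re = Real.cosh u.re * Real.cos u.im := by
      simp only [Complex.add_re, Complex.mul_re, Complex.ofReal_re, Complex.ofReal_im,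
        Complex.I_re, Complex.I_im]
      ring
    rw [cosh_decomp u, hre_eq]
    exact mul_pos (Real.cosh_pos u.re) hcos
  have hsqrt : (1 + Complex.sinh u ^ 2) ^ ((1 : ℂ) / 2) = Complex.cosh u := by
    have h1 : (1 : ℂ) + Complex.sinh u ^ 2 = Complex.cosh u ^ 2 := by
      rw [Complex.cosh_sq]; ring
    rw [h1, one_div]
    exact Complex.sq_cpow_two_inv hre
  unfold carcsinh
  rw [hsqrt, Complex.sinh_add_cosh]
  apply Complex.log_exp
  · rw [abs_lt] at hy; linarith
  · rw [abs_lt] at hy; linarith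

lemma conic_subset_aux (k : ℝ) (hk : 1 + 1 / Real.arsinh 1 ≤ k) :
    {w : ℂ | k * ‖w - 1‖ < w.re} ⊆ OmegaRho := by
  intro w hw
  set a : ℝ := Real.arsinh 1 with ha_def
  have ha : 0 < a := arsinh_one_pos
  set u := w - 1 with hu_def
  have habs : ‖u‖ < a := by
    have h2 : k * ‖u‖ < w.re := hw
    have h3 : w.re ≤ ‖w‖ := Complex.re_le_norm w
    have h4 : ‖w‖ ≤ ‖u‖ + 1 := by
      calc ‖w‖ = ‖u + 1‖ := by rw [hu_def]; ring_nf
        _ ≤ ‖u‖ + ‖(1:ℂ)‖ := norm_add_le u 1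
        _ = ‖u‖ + 1 := by rw [norm_one]
    have hk1 : 1 / a ≤ k - 1 := by linarith
    have h5 : (k - 1) * ‖u‖ < 1 := by linarith
    have h6 : (1 / a) * ‖u‖ ≤ (k - 1) * ‖u‖ :=
      mul_le_mul_of_nonneg_right hk1 (norm_nonneg u)
    have h7 : ‖u‖ / a < 1 := by
      rw [div_eq_inv_mul, ← one_div]
      linarith
    exact (div_lt_one ha).1 h7
  refine ⟨Complex.sinh u, abs_sinh_lt_one u habs, ?_⟩
  unfold ρ
  rw [carcsinh_sinh u habs]
  rw [hu_def]
  ring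

/-- For `k ≥ 1 + 1/arcsinh 1`, the conic domain `{w : Re w > k |w - 1|}` is contained
in `Ω_ρ`; consequently every `k`-starlike function belongs to `S*_ρ` (its quantity
`z f'(z)/f(z)` takes values in `Ω_ρ`). -/
theorem conic_subset_OmegaRho (k : ℝ) (hk : 1 + 1 / Real.arsinh 1 ≤ k) :
    {w : ℂ | k * ‖w - 1‖ < w.re} ⊆ OmegaRho ∧
    ∀ f : ℂ → ℂ, AnalyticOnNhd ℂ f unitDisk → f 0 = 0 → deriv f 0 = 1 →
      (∀ z ∈ unitDisk, z ≠ 0 →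
        k * ‖z * deriv f z / f z - 1‖ < (z * deriv f z / f z).re) →
      ∀ z ∈ unitDisk, z ≠ 0 → z * deriv f z / f z ∈ OmegaRho := by
  refine ⟨conic_subset_aux k hk, ?_⟩
  intro f _ _ _ hcond z hz hz0
  exact conic_subset_aux k hk (hcond z hz hz0)
end

section
/- Let −1 < D < C ≤ 1 be real and let f be analytic on 𝔻 with f(0) = 0, f'(0) = 1, and |z·f'(z) − f(z)| < |C·f(z) − D·z·f'(z)| for all z ∈ 𝔻 with z ≠ 0 (i.e. f ∈ S*[C,D], the Janowski starlike class). Suppose that either (i) (1 − arcsinh(1))·(1 − D²) < 1 − C·D ≤ 1 − D² and C − D ≤ (1 − D)·arcsinh(1), or (ii) 1 − D² ≤ 1 − C·D < (1 + arcsinh(1))·(1 − D²) and C − D ≤ (1 + D)·arcsinh(1). Then for every z ∈ 𝔻 with z ≠ 0, f(z) ≠ 0 and z·f'(z)/f(z) ∈ Ω_ρ; that is, S*[C,D] ⊂ S*_ρ. -/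
open Complex

/-- The modulus of the complex `sinh` is at most `sinh` of the modulus. -/
lemma abs_sinh_le' (z : ℂ) : ‖Complex.sinh z‖ ≤ Real.sinh ‖z‖ :=
  (Complex.hasSum_sinh z).norm_le_of_bounded (Real.hasSum_sinh ‖z‖) fun n => by
    rw [norm_div, norm_pow, Complex.norm_natCast]

/-- `cosh` has positive real part on the horizontal strip `|Im v| < π/2`. -/
lemma cosh_re_pos' {v : ℂ} (hy : |v.im| < Real.pi / 2) : 0 < (Complex.cosh v).re := by
  have hcos : 0 < Real.cos v.im := Real.cos_pos_of_mem_Ioo (abs_lt.mp hy |> fun h => ⟨h.1, h.2⟩)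
  have : (Complex.cosh v).re = (Real.exp v.re + Real.exp (-v.re)) * Real.cos v.im / 2 := by
    simp [Complex.cosh, Complex.exp_re, Complex.add_re, Complex.div_re, Complex.normSq]
    ring
  rw [this]; positivity

/-- On the strip `|Im v| < π/2`, the principal square root of `1 + sinh² v` is `cosh v`. -/
lemma sqrt_cosh' {v : ℂ} (hy : |v.im| < Real.pi / 2) :
    (1 + Complex.sinh v ^ 2) ^ ((1 : ℂ) / 2) = Complex.cosh v := by
  have hre := cosh_re_pos' hy
  have hc : Complex.cosh v ≠ 0 := by
    intro h; rw [h] at hre; simp at hre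
  have h1 : 1 + Complex.sinh v ^ 2 = Complex.cosh v ^ 2 := by
    rw [Complex.cosh_sq]; ring
  have harg : |Complex.arg (Complex.cosh v)| < Real.pi / 2 :=
    Complex.abs_arg_lt_pi_div_two_iff.mpr (Or.inl hre)
  have hmem : Complex.arg (Complex.cosh v) + Complex.arg (Complex.cosh v) ∈
      Set.Ioc (-Real.pi) Real.pi := by
    obtain ⟨ha, hb⟩ := abs_lt.mp harg
    constructor <;> [linarith; linarith]
  have hlog : Complex.log (Complex.cosh v ^ 2) = 2 * Complex.log (Complex.cosh v) := by
    rw [sq, Complex.log_mul hc hc hmem]; ring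
  rw [h1, Complex.cpow_def_of_ne_zero (pow_ne_zero 2 hc), hlog]
  rw [show 2 * Complex.log (Complex.cosh v) * (1 / 2) = Complex.log (Complex.cosh v) by ring,
    Complex.exp_log hc]

/-- Any point at distance less than `arsinh 1` from `1` lies in `Ω_ρ`. -/
lemma mem_OmegaRho_of_close {w : ℂ} (hw : ‖w - 1‖ < Real.arsinh 1) :
    w ∈ OmegaRho := by
  set v := w - 1 with hv
  have hs1 : Real.arsinh 1 < 1 := by
    calc Real.arsinh 1 < Real.arsinh (Real.sinh 1) :=
          Real.arsinh_strictMono (Real.self_lt_sinh_iff.mpr one_pos)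
      _ = 1 := Real.arsinh_sinh 1
  have hv1 : ‖v‖ < 1 := hw.trans hs1
  have him : |v.im| < Real.pi / 2 :=
    lt_of_le_of_lt (Complex.abs_im_le_norm v) (hv1.trans (by linarith [Real.pi_gt_three]))
  have hu : ‖Complex.sinh v‖ < 1 := by
    calc ‖Complex.sinh v‖ ≤ Real.sinh ‖v‖ := abs_sinh_le' v
      _ < Real.sinh (Real.arsinh 1) := Real.sinh_lt_sinh.mpr hw
      _ = 1 := Real.sinh_arsinh 1
  refine ⟨Complex.sinh v, hu, ?_⟩
  unfold ρ carcsinh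
  rw [sqrt_cosh' him, Complex.sinh_add_cosh, Complex.log_exp ?_ ?_]
  · rw [hv]; ring
  · have := (abs_lt.mp him).1
    nlinarith [Real.pi_gt_three]
  · have := (abs_lt.mp him).2
    nlinarith [Real.pi_gt_three]

set_option maxHeartbeats 1000000 in
/-- If `f` is Janowski starlike (`f ∈ S*[C,D]`, `-1 < D < C ≤ 1`) and either
(i) `(1 - arcsinh 1)(1 - D²) < 1 - CD ≤ 1 - D²` and `C - D ≤ (1 - D) arcsinh 1`, or
(ii) `1 - D² ≤ 1 - CD < (1 + arcsinh 1)(1 - D²)` and `C - D ≤ (1 + D) arcsinh 1`,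
then `f ∈ S*_ρ`. -/
theorem janowski_subset_SstarRho (C D : ℝ) (hD : -1 < D) (hDC : D < C) (hC : C ≤ 1)
    (f : ℂ → ℂ) (hf : AnalyticOnNhd ℂ f unitDisk) (hf0 : f 0 = 0) (hf1 : deriv f 0 = 1)
    (hJan : ∀ z ∈ unitDisk, z ≠ 0 →
      ‖z * deriv f z - f z‖ <
        ‖(C : ℂ) * f z - (D : ℂ) * (z * deriv f z)‖)
    (h : ((1 - Real.arsinh 1) * (1 - D ^ 2) < 1 - C * D ∧ 1 - C * D ≤ 1 - D ^ 2 ∧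
            C - D ≤ (1 - D) * Real.arsinh 1) ∨
          (1 - D ^ 2 ≤ 1 - C * D ∧ 1 - C * D < (1 + Real.arsinh 1) * (1 - D ^ 2) ∧
            C - D ≤ (1 + D) * Real.arsinh 1)) :
    ∀ z ∈ unitDisk, z ≠ 0 → f z ≠ 0 ∧ z * deriv f z / f z ∈ OmegaRho := by
  intro z hz hz0
  have hD1 : D < 1 := lt_of_lt_of_le hDC hC
  have hDD : (0 : ℝ) < 1 - D ^ 2 := by nlinarith
  have hJ := hJan z hz hz0
  -- `f z ≠ 0`
  have hfz : f z ≠ 0 := by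
    intro h0
    rw [h0] at hJ
    simp only [sub_zero, mul_zero, zero_sub, norm_neg, norm_mul] at hJ
    have hDabs : ‖(D : ℂ)‖ < 1 := by
      rw [Complex.norm_real, Real.norm_eq_abs]; exact abs_lt.mpr ⟨hD, hD1⟩
    have h1 : ‖z * deriv f z‖ <
        ‖(D : ℂ)‖ * ‖z * deriv f z‖ := by
      simpa [map_mul] using hJ
    nlinarith [norm_nonneg (z * deriv f z), norm_nonneg ((D : ℂ))]
  refine ⟨hfz, ?_⟩
  set w := z * deriv f z / f z with hwdef
  have hw : ‖w - 1‖ < ‖(C : ℂ) - (D : ℂ) * w‖ := by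
    have e1 : z * deriv f z - f z = f z * (w - 1) := by
      rw [hwdef]; field_simp
    have e2 : (C : ℂ) * f z - (D : ℂ) * (z * deriv f z) = f z * ((C : ℂ) - (D : ℂ) * w) := by
      rw [hwdef]; field_simp
    rw [e1, e2, norm_mul, norm_mul] at hJ
    exact lt_of_mul_lt_mul_left hJ (norm_nonneg _)
  set x := w.re with hx
  set y := w.im with hy
  have hnormlt : (x - 1) ^ 2 + y ^ 2 < (C - D * x) ^ 2 + (D * y) ^ 2 := by
    have h2 : Complex.normSq (w - 1) < Complex.normSq ((C : ℂ) - (D : ℂ) * w) := by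
      rw [← Complex.sq_norm, ← Complex.sq_norm]
      exact pow_lt_pow_left₀ hw (norm_nonneg _) two_ne_zero
    have e3 : Complex.normSq (w - 1) = (x - 1) ^ 2 + y ^ 2 := by
      simp [Complex.normSq_apply]; ring
    have e4 : Complex.normSq ((C : ℂ) - (D : ℂ) * w) = (C - D * x) ^ 2 + (D * y) ^ 2 := by
      simp [Complex.normSq_apply]; ring
    rwa [e3, e4] at h2
  set s := Real.arsinh 1 with hs
  have hs0 : (0 : ℝ) < s := by
    rw [hs, ← Real.arsinh_zero]
    exact Real.arsinh_strictMono one_pos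
  set c := (1 - C * D) / (1 - D ^ 2) with hc
  set r := (C - D) / (1 - D ^ 2) with hr
  have hr0 : (0 : ℝ) < r := div_pos (by linarith) hDD
  have hdisk : ‖w - (c : ℂ)‖ < r := by
    have e5 : Complex.normSq (w - (c : ℂ)) = (x - c) ^ 2 + y ^ 2 := by
      simp [Complex.normSq_apply]; ring
    have hid : ((x - c) ^ 2 + y ^ 2 - r ^ 2) * (1 - D ^ 2)
        = ((x - 1) ^ 2 + y ^ 2) - ((C - D * x) ^ 2 + (D * y) ^ 2) := by
      rw [hc, hr]; field_simp; ring
    have h2 : ‖w - (c : ℂ)‖ ^ 2 < r ^ 2 := by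
      rw [Complex.sq_norm, e5]; nlinarith [hid, hnormlt, hDD]
    exact lt_of_pow_lt_pow_left₀ 2 hr0.le h2
  have hkey : r + |c - 1| ≤ s := by
    rcases h with ⟨h1, h2, h3⟩ | ⟨h1, h2, h3⟩
    · have hDpos : 0 ≤ D := by nlinarith
      have hcle : c ≤ 1 := by rw [hc, div_le_one hDD]; linarith
      have habs : |c - 1| = 1 - c := by rw [abs_of_nonpos (by linarith)]; ring
      have e6 : r + |c - 1| = ((C - D) + (1 - D ^ 2) - (1 - C * D)) / (1 - D ^ 2) := by
        rw [habs, hc, hr]; field_simp; ring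
      rw [e6, div_le_iff₀ hDD]
      nlinarith [mul_nonneg (sub_nonneg.mpr h3) (by linarith : (0 : ℝ) ≤ 1 + D)]
    · have hDneg : D ≤ 0 := by nlinarith
      have hcge : (1 : ℝ) ≤ c := by rw [hc, le_div_iff₀ hDD]; linarith
      have habs : |c - 1| = c - 1 := abs_of_nonneg (by linarith)
      have e6 : r + |c - 1| = ((C - D) + (1 - C * D) - (1 - D ^ 2)) / (1 - D ^ 2) := by
        rw [habs, hc, hr]; field_simp; ring
      rw [e6, div_le_iff₀ hDD]
      nlinarith [mul_nonneg (sub_nonneg.mpr h3) (by linarith : (0 : ℝ) ≤ 1 - D)]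
  have htri : ‖w - 1‖ < s := by
    have e7 : w - 1 = (w - (c : ℂ)) + ((c : ℂ) - 1) := by ring
    have e8 : ‖(c : ℂ) - 1‖ = |c - 1| := by
      rw [show ((c : ℂ) - 1) = ((c - 1 : ℝ) : ℂ) by push_cast; ring, Complex.norm_real, Real.norm_eq_abs]
    calc ‖w - 1‖ ≤ ‖w - (c : ℂ)‖ + ‖(c : ℂ) - 1‖ := by
          rw [e7]; exact norm_add_le _ _
      _ < r + |c - 1| := by rw [e8]; exact add_lt_add_left hdisk _
      _ ≤ s := hkey
  exact mem_OmegaRho_of_close htri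
end

section
/- Let f ∈ S*_ρ. (a) If 1 − arcsinh(1) ≤ α < 1, then for every z with 0 < |z| < sinh(1 − α) (Real.sinh), f(z) ≠ 0 and Re(z·f'(z)/f(z)) > α. (b) If 1 < β ≤ 1 + arcsinh(1), then for every z with 0 < |z| < sinh(β − 1), f(z) ≠ 0 and Re(z·f'(z)/f(z)) < β. -/
open Complex

/-- The class `S*_ρ`: analytic normalized functions with `z f'(z)/f(z)` subordinate to
`ρ(z) = 1 + arcsinh z` via a Schwarz function `ω`. -/
def SstarRho (f : ℂ → ℂ) : Prop :=
  AnalyticOnNhd ℂ f unitDisk ∧ f 0 = 0 ∧ deriv f 0 = 1 ∧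
    ∃ ω : ℂ → ℂ, AnalyticOnNhd ℂ ω unitDisk ∧ ω 0 = 0 ∧
      (∀ z ∈ unitDisk, ‖ω z‖ ≤ ‖z‖) ∧
      ∀ z ∈ unitDisk, z * deriv f z = f z * ρ (ω z)


open Filter Topology

lemma one_add_sq_ne {w : ℂ} (hw : ‖w‖ < 1) : (1 : ℂ) + w ^ 2 ≠ 0 := by
  intro h
  have h2 : w ^ 2 = -1 := by linear_combination h
  have : ‖w ^ 2‖ = 1 := by rw [h2]; simp
  rw [norm_pow] at this
  nlinarith [norm_nonneg w]

lemma abs_v_lower_upper {w : ℂ} (hw : ‖w‖ < 1) :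
    Real.exp (-(Real.arsinh (‖w‖))) ≤ ‖w + (1 + w ^ 2) ^ ((1 : ℂ) / 2)‖ ∧
    ‖w + (1 + w ^ 2) ^ ((1 : ℂ) / 2)‖ ≤ Real.exp (Real.arsinh (‖w‖)) := by
  set u : ℂ := (1 + w ^ 2) ^ ((1 : ℂ) / 2) with hu_def
  have hne := one_add_sq_ne hw
  have huu : u * u = 1 + w ^ 2 := by
    rw [hu_def, ← Complex.cpow_add _ _ hne]
    norm_num
  have habsu : ‖u‖ ≤ Real.sqrt (1 + ‖w‖ ^ 2) := by
    have h1 : ‖u‖ = ‖1 + w ^ 2‖ ^ ((1 : ℝ) / 2) := by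
      rw [hu_def]
      have : ((1 : ℂ) / 2) = (((1 : ℝ) / 2 : ℝ) : ℂ) := by norm_num
      rw [this, Complex.norm_cpow_real]
    have h2 : ‖1 + w ^ 2‖ ≤ 1 + ‖w‖ ^ 2 := by
      calc ‖1 + w ^ 2‖ ≤ ‖1‖ + ‖w ^ 2‖ := norm_add_le _ _
      _ = 1 + ‖w‖ ^ 2 := by rw [norm_pow]; simp
    rw [h1, Real.sqrt_eq_rpow]
    exact Real.rpow_le_rpow (norm_nonneg _) h2 (by norm_num)
  have hE : Real.exp (Real.arsinh (‖w‖)) = ‖w‖ + Real.sqrt (1 + ‖w‖ ^ 2) :=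
    Real.exp_arsinh _
  constructor
  · -- lower bound: |w+u| * |u-w| = 1 and |u-w| ≤ E
    have hprod : (w + u) * (u - w) = 1 := by linear_combination huu
    have habs : ‖w + u‖ * ‖u - w‖ = 1 := by
      rw [← norm_mul, hprod, norm_one]
    have hub : ‖u - w‖ ≤ Real.exp (Real.arsinh (‖w‖)) := by
      calc ‖u - w‖ ≤ ‖u‖ + ‖w‖ := by
            simpa [sub_eq_add_neg] using norm_add_le u (-w)
      _ ≤ Real.sqrt (1 + ‖w‖ ^ 2) + ‖w‖ := by linarith
      _ = _ := by rw [hE]; ring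
    have hpos : 0 < ‖u - w‖ := by
      rcases eq_or_lt_of_le (norm_nonneg (u - w)) with h | h
      · exfalso; rw [← h] at habs; simp at habs
      · exact h
    have hinv : ‖w + u‖ = (‖u - w‖)⁻¹ :=
      eq_inv_of_mul_eq_one_left (by linarith [mul_comm (‖w + u‖) (‖u - w‖)])
    rw [Real.exp_neg, hinv]
    exact inv_anti₀ hpos hub
  · calc ‖w + u‖ ≤ ‖w‖ + ‖u‖ := norm_add_le _ _
    _ ≤ ‖w‖ + Real.sqrt (1 + ‖w‖ ^ 2) := by linarith
    _ = _ := hE.symm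

lemma rho_re_bounds {w : ℂ} (hw : ‖w‖ < 1) :
    1 - Real.arsinh (‖w‖) ≤ (ρ w).re ∧
    (ρ w).re ≤ 1 + Real.arsinh (‖w‖) := by
  obtain ⟨hlo, hhi⟩ := abs_v_lower_upper hw
  set v : ℂ := w + (1 + w ^ 2) ^ ((1 : ℂ) / 2) with hv
  have hvpos : 0 < ‖v‖ := lt_of_lt_of_le (Real.exp_pos _) hlo
  have hre : (ρ w).re = 1 + Real.log (‖v‖) := by
    show ((1 : ℂ) + Complex.log v).re = _
    rw [Complex.add_re, Complex.one_re, Complex.log_re]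
  rw [hre]
  constructor
  · have : -(Real.arsinh (‖w‖)) ≤ Real.log (‖v‖) :=
      (Real.le_log_iff_exp_le hvpos).2 hlo
    linarith
  · have : Real.log (‖v‖) ≤ Real.arsinh (‖w‖) :=
      (Real.log_le_iff_le_exp hvpos).2 hhi
    linarith

lemma arsinh_one_le_one : Real.arsinh 1 ≤ 1 := by
  rw [← Real.sinh_le_sinh, Real.sinh_arsinh]
  have h1 : Real.sinh 1 = (Real.exp 1 - Real.exp (-1)) / 2 := Real.sinh_eq 1
  have h2 : (2.7182818283 : ℝ) < Real.exp 1 := Real.exp_one_gt_d9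
  have h3 : Real.exp (-1) = (Real.exp 1)⁻¹ := Real.exp_neg 1
  have h4 : Real.exp (-1) < 1 / 2 := by
    rw [h3]
    rw [inv_lt_comm₀ (Real.exp_pos 1) (by norm_num)]
    linarith
  rw [h1]; linarith

lemma rho_abs_le {w : ℂ} (hw : ‖w‖ < 1) : ‖ρ w‖ ≤ 6 := by
  obtain ⟨hlo, hhi⟩ := abs_v_lower_upper hw
  set v : ℂ := w + (1 + w ^ 2) ^ ((1 : ℂ) / 2) with hv
  have hvpos : 0 < ‖v‖ := lt_of_lt_of_le (Real.exp_pos _) hlo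
  have ha1 : Real.arsinh (‖w‖) ≤ 1 :=
    le_trans (Real.arsinh_le_arsinh.2 hw.le) arsinh_one_le_one
  have hre : |(Complex.log v).re| ≤ 1 := by
    rw [Complex.log_re, abs_le]
    constructor
    · have := (Real.le_log_iff_exp_le hvpos).2 hlo
      linarith
    · have := (Real.log_le_iff_le_exp hvpos).2 hhi
      linarith
  have him : |(Complex.log v).im| ≤ 4 := by
    rw [Complex.log_im]
    exact le_trans (Complex.abs_arg_le_pi v) (by linarith [Real.pi_le_four])
  calc ‖ρ w‖ ≤ ‖1‖ + ‖carcsinh w‖ := norm_add_le _ _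
  _ ≤ 1 + (|(Complex.log v).re| + |(Complex.log v).im|) := by
      rw [norm_one]
      have : carcsinh w = Complex.log v := rfl
      rw [this]
      linarith [Complex.norm_le_abs_re_add_abs_im (Complex.log v)]
  _ ≤ 6 := by linarith

lemma unitDisk_eq_ball : unitDisk = Metric.ball (0 : ℂ) 1 := by
  ext z; simp [unitDisk, Metric.mem_ball, Complex.dist_eq]

lemma isOpen_unitDisk : IsOpen unitDisk := by
  rw [unitDisk_eq_ball]; exact Metric.isOpen_ball

lemma SstarRho_ne_zero (f : ℂ → ℂ) (hfa : AnalyticOnNhd ℂ f unitDisk)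
    (hd : deriv f 0 = 1)
    (ω : ℂ → ℂ) (hωb : ∀ z ∈ unitDisk, ‖ω z‖ ≤ ‖z‖)
    (heq : ∀ z ∈ unitDisk, z * deriv f z = f z * ρ (ω z)) :
    ∀ z ∈ unitDisk, z ≠ 0 → f z ≠ 0 := by
  have hopen : IsOpen unitDisk := isOpen_unitDisk
  have h0mem : (0 : ℂ) ∈ unitDisk := by simp [unitDisk]
  have hpre : IsPreconnected unitDisk := by
    rw [unitDisk_eq_ball]; exact (convex_ball (0 : ℂ) 1).isPreconnected
  intro z0 hz0 hz0ne hf0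
  have hnotev : ¬ (∀ᶠ z in 𝓝 z0, f z = 0) := by
    intro hev
    have hzero : Set.EqOn f 0 unitDisk :=
      hfa.eqOn_zero_of_preconnected_of_eventuallyEq_zero hpre hz0 hev
    have h1 : f =ᶠ[𝓝 (0 : ℂ)] (fun _ => (0 : ℂ)) :=
      Filter.eventuallyEq_of_mem (hopen.mem_nhds h0mem) hzero
    have h2 := h1.deriv_eq
    rw [hd, deriv_const] at h2
    exact one_ne_zero h2
  have hA : AnalyticAt ℂ f z0 := hfa z0 hz0
  have horder_ne_top : analyticOrderAt f z0 ≠ ⊤ := fun h => hnotev (analyticOrderAt_eq_top.1 h)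
  obtain ⟨n, hn⟩ : ∃ n : ℕ, analyticOrderAt f z0 = (n : ℕ∞) := by
    lift analyticOrderAt f z0 to ℕ using horder_ne_top with n hn
    exact ⟨n, rfl⟩
  obtain ⟨g, hg, hgne, hfg⟩ := (hA.analyticOrderAt_eq_natCast (n := n)).1 hn
  -- n ≥ 1
  have hfz0 : f z0 = (z0 - z0) ^ n • g z0 := hfg.self_of_nhds
  have hn1 : n ≠ 0 := by
    intro h
    rw [h] at hfz0
    simp [hf0] at hfz0
    exact hgne hfz0.symm
  obtain ⟨m, rfl⟩ : ∃ m, n = m + 1 := ⟨n - 1, (Nat.succ_pred_eq_of_pos (Nat.pos_of_ne_zero hn1)).symm⟩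
  -- eventual inequality on the punctured neighborhood
  have hfg' : f =ᶠ[𝓝 z0] (fun z => (z - z0) ^ (m + 1) * g z) := by
    filter_upwards [hfg] with z hz using by simpa [smul_eq_mul] using hz
  have hderiv_ev : ∀ᶠ z in 𝓝 z0,
      deriv f z = (z - z0) ^ m * (((m : ℂ) + 1) * g z + (z - z0) * deriv g z) := by
    filter_upwards [hfg'.deriv, hg.eventually_analyticAt] with z hdz hgz
    have h1 : HasDerivAt (fun y : ℂ => (y - z0) ^ (m + 1))
        ((((m : ℂ) + 1)) * (z - z0) ^ m * 1) z := by
      exact ((hasDerivAt_id z).sub_const z0).pow (m + 1) |>.congr_deriv (by simp only [id_eq]; push_cast; ring)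
    have h2 : HasDerivAt g (deriv g z) z := hgz.differentiableAt.hasDerivAt
    have h3 : HasDerivAt (fun y => (y - z0) ^ (m + 1) * g y) _ z := h1.mul h2
    rw [hdz, h3.deriv]
    push_cast
    ring
  have hev : ∀ᶠ z in 𝓝[≠] z0,
      ‖z‖ * ‖((m : ℂ) + 1) * g z + (z - z0) * deriv g z‖
        ≤ 6 * (‖z - z0‖ * ‖g z‖) := by
    have hmem : ∀ᶠ z in 𝓝 z0, z ∈ unitDisk := hopen.eventually_mem hz0
    filter_upwards [nhdsWithin_le_nhds hmem, nhdsWithin_le_nhds hfg',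
      nhdsWithin_le_nhds hderiv_ev, self_mem_nhdsWithin] with z hz1 hfz hdf hzz0
    have hzz0' : z ≠ z0 := hzz0
    have hρ : ‖ρ (ω z)‖ ≤ 6 :=
      rho_abs_le (lt_of_le_of_lt (hωb z hz1) hz1)
    have e1 : ‖z * deriv f z‖ = ‖f z * ρ (ω z)‖ := by
      rw [heq z hz1]
    rw [hdf, hfz] at e1
    simp only [norm_mul, norm_pow] at e1
    set p := ‖z - z0‖ ^ m with hp_def
    set q := ‖z - z0‖ with hq_def
    set A := ‖((m : ℂ) + 1) * g z + (z - z0) * deriv g z‖ with hA_def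
    set G := ‖g z‖ with hG_def
    set R := ‖ρ (ω z)‖ with hR_def
    have hqpos : 0 < q := by
      rw [hq_def]
      exact norm_pos_iff.2 (sub_ne_zero.mpr hzz0')
    have hppos : 0 < p := pow_pos hqpos m
    -- e1 : |z| * (p * A) = q^(m+1) * (G * R)
    have e2 : p * (‖z‖ * A) = p * (q * (G * R)) := by
      rw [hp_def]
      linear_combination e1 + G * R * (pow_succ q m)
    have e3 : ‖z‖ * A = q * (G * R) := mul_left_cancel₀ (ne_of_gt hppos) e2
    rw [e3]
    have hGnn : 0 ≤ G := norm_nonneg _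
    nlinarith [mul_nonneg (mul_nonneg hqpos.le hGnn) (sub_nonneg.2 hρ)]
  -- take the limit
  have hderivg : AnalyticAt ℂ (deriv g) z0 := by
    obtain ⟨s, hs_mem, hs⟩ := hg.eventually_analyticAt.exists_mem
    exact (AnalyticOnNhd.deriv (fun z hz => hs z hz)) z0 (mem_of_mem_nhds hs_mem)
  have hlim1 : Filter.Tendsto
      (fun z => ‖z‖ * ‖((m : ℂ) + 1) * g z + (z - z0) * deriv g z‖)
      (𝓝[≠] z0) (𝓝 (‖z0‖ * ‖((m : ℂ) + 1) * g z0‖)) := by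
    have hc : ContinuousAt
        (fun z => ‖z‖ * ‖((m : ℂ) + 1) * g z + (z - z0) * deriv g z‖) z0 := by
      apply ContinuousAt.mul
      · exact continuous_norm.continuousAt
      · exact continuous_norm.continuousAt.comp
          ((continuousAt_const.mul hg.continuousAt).add
            ((continuousAt_id.sub continuousAt_const).mul hderivg.continuousAt))
    have := hc.tendsto.mono_left (nhdsWithin_le_nhds (s := {z0}ᶜ))
    simpa using this
  have hlim2 : Filter.Tendsto
      (fun z => 6 * (‖z - z0‖ * ‖g z‖)) (𝓝[≠] z0) (𝓝 0) := by
    have hc : ContinuousAt (fun z => 6 * (‖z - z0‖ * ‖g z‖)) z0 := by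
      apply ContinuousAt.mul continuousAt_const
      apply ContinuousAt.mul
      · exact continuous_norm.continuousAt.comp (continuousAt_id.sub continuousAt_const)
      · exact continuous_norm.continuousAt.comp hg.continuousAt
    have := hc.tendsto.mono_left (nhdsWithin_le_nhds (s := {z0}ᶜ))
    simpa using this
  have hle : ‖z0‖ * ‖((m : ℂ) + 1) * g z0‖ ≤ 0 :=
    le_of_tendsto_of_tendsto hlim1 hlim2 hev
  have hpos : 0 < ‖z0‖ * ‖((m : ℂ) + 1) * g z0‖ := by
    apply mul_pos (norm_pos_iff.2 hz0ne)
    apply norm_pos_iff.2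
    apply mul_ne_zero _ hgne
    have : ((m + 1 : ℕ) : ℂ) ≠ 0 := Nat.cast_ne_zero.2 (Nat.succ_ne_zero m)
    push_cast at this
    exact this
  linarith

/-- Radius results for `f ∈ S*_ρ`:
(a) for `1 - arcsinh 1 ≤ α < 1`, `f` is starlike of order `α` in `|z| < sinh (1 - α)`;
(b) for `1 < β ≤ 1 + arcsinh 1`, `f ∈ M(β)` in `|z| < sinh (β - 1)`. -/
theorem SstarRho_radius_starlike_M (f : ℂ → ℂ) (hf : SstarRho f) :
    (∀ α : ℝ, 1 - Real.arsinh 1 ≤ α → α < 1 →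
      ∀ z : ℂ, 0 < ‖z‖ → ‖z‖ < Real.sinh (1 - α) →
        f z ≠ 0 ∧ α < (z * deriv f z / f z).re) ∧
    (∀ β : ℝ, 1 < β → β ≤ 1 + Real.arsinh 1 →
      ∀ z : ℂ, 0 < ‖z‖ → ‖z‖ < Real.sinh (β - 1) →
        f z ≠ 0 ∧ (z * deriv f z / f z).re < β) := by
  obtain ⟨hfa, hf0, hd, ω, hωa, hω0, hωb, heq⟩ := hf
  have hne := SstarRho_ne_zero f hfa hd ω hωb heq
  constructor
  · intro α hα1 hα2 z hz0 hzr
    have h1α : 1 - α ≤ Real.arsinh 1 := by linarith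
    have hz1 : ‖z‖ < 1 := by
      calc ‖z‖ < Real.sinh (1 - α) := hzr
      _ ≤ Real.sinh (Real.arsinh 1) := Real.sinh_le_sinh.2 h1α
      _ = 1 := Real.sinh_arsinh 1
    have hzU : z ∈ unitDisk := hz1
    have hzne : z ≠ 0 := by
      intro h; rw [h] at hz0; simp at hz0
    have hfz := hne z hzU hzne
    refine ⟨hfz, ?_⟩
    have hquot : z * deriv f z / f z = ρ (ω z) := by
      rw [heq z hzU]
      field_simp
    rw [hquot]
    have hb := (rho_re_bounds (lt_of_le_of_lt (hωb z hzU) hz1)).1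
    have harc : Real.arsinh (‖ω z‖) < 1 - α := by
      calc Real.arsinh (‖ω z‖)
          ≤ Real.arsinh (‖z‖) := Real.arsinh_le_arsinh.2 (hωb z hzU)
      _ < Real.arsinh (Real.sinh (1 - α)) := Real.arsinh_lt_arsinh.2 hzr
      _ = 1 - α := Real.arsinh_sinh _
    linarith
  · intro β hβ1 hβ2 z hz0 hzr
    have h1β : β - 1 ≤ Real.arsinh 1 := by linarith
    have hz1 : ‖z‖ < 1 := by
      calc ‖z‖ < Real.sinh (β - 1) := hzr
      _ ≤ Real.sinh (Real.arsinh 1) := Real.sinh_le_sinh.2 h1β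
      _ = 1 := Real.sinh_arsinh 1
    have hzU : z ∈ unitDisk := hz1
    have hzne : z ≠ 0 := by
      intro h; rw [h] at hz0; simp at hz0
    have hfz := hne z hzU hzne
    refine ⟨hfz, ?_⟩
    have hquot : z * deriv f z / f z = ρ (ω z) := by
      rw [heq z hzU]
      field_simp
    rw [hquot]
    have hb := (rho_re_bounds (lt_of_le_of_lt (hωb z hzU) hz1)).2
    have harc : Real.arsinh (‖ω z‖) < β - 1 := by
      calc Real.arsinh (‖ω z‖)
          ≤ Real.arsinh (‖z‖) := Real.arsinh_le_arsinh.2 (hωb z hzU)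
      _ < Real.arsinh (Real.sinh (β - 1)) := Real.arsinh_lt_arsinh.2 hzr
      _ = β - 1 := Real.arsinh_sinh _
    linarith
end
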